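/- Suppose for all K ≥ 1: L(K) − L(0) + V Σ_{t=0}^{K−1}(P(t) − η(t)·R(t)) ≤ K·B + K·V·P* − V·R*·Σ_{t=0}^{K−1} η(t), where L(K) ≥ 0, L(0) = 0, P* ≤ R*·η_opt, R* > 0, V > 0, B ≥ 0, P(t) − η(t)R(t) ≥ 0 for all t, and (1/K)Σ_{t=0}^{K−1} η(t) converges to η as K → ∞. Then η ≤ B/(V·R*) + η_opt. -/
import Mathlib


/-- Performance bound (equation (59)): the achieved energy efficiency `η` is within
`B / (V * Rstar)` of the optimum `ηopt`. -/
theorem lyapunov_performance_bound (P R η : ℕ → ℝ) (L : ℕ → ℝ)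
    (B V Rstar Pstar ηopt ηlim : ℝ)
    (hB : 0 ≤ B) (hV : 0 < V) (hRstar : 0 < Rstar)
    (hL0 : L 0 = 0) (hLpos : ∀ K, 0 ≤ L K)
    (hPstar : Pstar ≤ Rstar * ηopt)
    (hnonneg : ∀ t, 0 ≤ P t - η t * R t)
    (hsum : ∀ K, 1 ≤ K →
      L K - L 0 + V * ∑ t ∈ Finset.range K, (P t - η t * R t) ≤
        K * B + K * V * Pstar - V * Rstar * ∑ t ∈ Finset.range K, η t)
    (hconv : Filter.Tendsto (fun K : ℕ => (1 / (K : ℝ)) * ∑ t ∈ Finset.range K, η t)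
      Filter.atTop (nhds ηlim)) :
    ηlim ≤ B / (V * Rstar) + ηopt := by
  have key : ∀ K : ℕ, 1 ≤ K →
      (1 / (K : ℝ)) * ∑ t ∈ Finset.range K, η t ≤ B / (V * Rstar) + ηopt := by
    intro K hK
    have hKpos : (0 : ℝ) < K := by exact_mod_cast hK
    set S := ∑ t ∈ Finset.range K, η t with hS
    have hsum' := hsum K hK
    have hLB : 0 ≤ L K - L 0 + V * ∑ t ∈ Finset.range K, (P t - η t * R t) := by
      have h1 : 0 ≤ ∑ t ∈ Finset.range K, (P t - η t * R t) :=
        Finset.sum_nonneg fun t _ => hnonneg t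
      have := hLpos K
      nlinarith
    have h2 : V * Rstar * S ≤ K * B + K * V * Pstar := by linarith
    have h3 : K * V * Pstar ≤ K * V * (Rstar * ηopt) := by
      have : (0:ℝ) ≤ K * V := by positivity
      nlinarith
    have h4 : V * Rstar * S ≤ K * B + K * V * (Rstar * ηopt) := by linarith
    rw [one_div, inv_mul_le_iff₀ hKpos]
    have hd : B / (V * Rstar) * (V * Rstar) = B :=
      div_mul_cancel₀ _ (by positivity)
    nlinarith [mul_pos hV hRstar]
  have hev : ∀ᶠ K : ℕ in Filter.atTop,
      (1 / (K : ℝ)) * ∑ t ∈ Finset.range K, η t ≤ B / (V * Rstar) + ηopt :=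
    Filter.eventually_atTop.2 ⟨1, key⟩
  exact le_of_tendsto hconv hev
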